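/- Schur's ℓ¹ theorem: in the Banach space ℓ¹ (of absolutely summable real sequences), every weakly convergent sequence converges in norm. -/

import Mathlib

open Filter Topology

lemma l1_hasSum (f : lp (fun _ : ℕ => ℝ) 1) : HasSum (fun i => |f i|) ‖f‖ := by
  have := lp.hasSum_norm (p := 1) (by norm_num) f
  simpa using this

lemma l1_summable (f : lp (fun _ : ℕ => ℝ) 1) : Summable (fun i => |f i|) :=
  (l1_hasSum f).summable

lemma l1_norm (f : lp (fun _ : ℕ => ℝ) 1) : ‖f‖ = ∑' i, |f i| :=
  (l1_hasSum f).tsum_eq.symm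

lemma pair_summable (t : ℕ → ℝ) (ht : ∀ i, |t i| ≤ 1) (f : lp (fun _ : ℕ => ℝ) 1) :
    Summable (fun i => t i * f i) := by
  apply (l1_summable f).of_norm_bounded
  intro i
  rw [norm_mul]
  calc ‖t i‖ * ‖f i‖ ≤ 1 * ‖f i‖ := by
        apply mul_le_mul_of_nonneg_right (ht i) (norm_nonneg _)
    _ = |f i| := by simp
  -- done

noncomputable def pairing (t : ℕ → ℝ) (ht : ∀ i, |t i| ≤ 1) :
    lp (fun _ : ℕ => ℝ) 1 →L[ℝ] ℝ :=
  LinearMap.mkContinuous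
    { toFun := fun f => ∑' i, t i * f i
      map_add' := fun f g => by
        show ∑' i, t i * (f + g) i = (∑' i, t i * f i) + ∑' i, t i * g i
        have : ∀ i, t i * (f + g) i = t i * f i + t i * g i := by
          intro i
          rw [lp.coeFn_add]
          simp [mul_add]
        rw [tsum_congr this]
        exact Summable.tsum_add (pair_summable t ht f) (pair_summable t ht g)
      map_smul' := fun c f => by
        show ∑' i, t i * (c • f) i = c • ∑' i, t i * f i
        have : ∀ i, t i * (c • f) i = c * (t i * f i) := by
          intro i
          rw [lp.coeFn_smul]
          simp [smul_eq_mul]; ring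
        rw [tsum_congr this, tsum_mul_left]
        rfl }
    1
    (by
      intro f
      simp only [LinearMap.coe_mk, AddHom.coe_mk, one_mul]
      calc ‖∑' i, t i * f i‖ ≤ ∑' i, ‖t i * f i‖ :=
            norm_tsum_le_tsum_norm ((pair_summable t ht f).norm)
        _ ≤ ∑' i, |f i| := by
            apply Summable.tsum_le_tsum _ (pair_summable t ht f).norm (l1_summable f)
            intro i
            rw [norm_mul]
            calc ‖t i‖ * ‖f i‖ ≤ 1 * ‖f i‖ :=
                  mul_le_mul_of_nonneg_right (ht i) (norm_nonneg _)
              _ = |f i| := by simp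
        _ = ‖f‖ := (l1_norm f).symm)

lemma pairing_apply (t : ℕ → ℝ) (ht : ∀ i, |t i| ≤ 1) (f : lp (fun _ : ℕ => ℝ) 1) :
    pairing t ht f = ∑' i, t i * f i := rfl

noncomputable def coord (i : ℕ) : lp (fun _ : ℕ => ℝ) 1 →L[ℝ] ℝ :=
  LinearMap.mkContinuous
    { toFun := fun f => f i
      map_add' := fun f g => by
        show (f + g : ∀ _ : ℕ, ℝ) i = f i + g i
        simp
      map_smul' := fun c f => by
        show (c • f : ∀ _ : ℕ, ℝ) i = c • (f i : ℝ)
        simp }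
    1
    (by
      intro f
      simp only [LinearMap.coe_mk, AddHom.coe_mk, one_mul]
      exact lp.norm_apply_le_norm (by norm_num) f i)

lemma real_sign_mul_self (r : ℝ) : Real.sign r * r = |r| := by
  rcases lt_trichotomy r 0 with h | h | h
  · rw [Real.sign_of_neg h, abs_of_neg h]; ring
  · simp [h]
  · rw [Real.sign_of_pos h, abs_of_pos h]; ring

lemma abs_sign_le (r : ℝ) : |Real.sign r| ≤ 1 := by
  rcases Real.sign_apply_eq r with h | h | h <;> rw [h] <;> norm_num

lemma iic_eq_range (n : ℕ) : Finset.Iic n = Finset.range (n + 1) := by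
  simp [Finset.ext_iff, Nat.lt_succ_iff]

lemma l1_partial_tendsto (f : lp (fun _ : ℕ => ℝ) 1) :
    Tendsto (fun n => ∑ i ∈ Finset.Iic n, |f i|) atTop (𝓝 ‖f‖) := by
  have h1 := (l1_hasSum f).tendsto_sum_nat
  have h2 : Tendsto (fun n : ℕ => n + 1) atTop atTop := tendsto_add_atTop_nat 1
  have h3 := h1.comp h2
  have : (fun n => ∑ i ∈ Finset.Iic n, |f i|)
      = (fun n : ℕ => ∑ i ∈ Finset.range n, |f i|) ∘ (fun n : ℕ => n + 1) := by
    funext n; simp [iic_eq_range]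
  rw [this]; exact h3

/-- Schur's ℓ¹ theorem: every weakly convergent sequence in `ℓ¹` converges in norm. -/
theorem stmt_4 (x : ℕ → lp (fun _ : ℕ => ℝ) 1) (y : lp (fun _ : ℕ => ℝ) 1)
    (hw : ∀ f : lp (fun _ : ℕ => ℝ) 1 →L[ℝ] ℝ,
      Tendsto (fun k => f (x k)) atTop (𝓝 (f y))) :
    Tendsto (fun k => ‖x k - y‖) atTop (𝓝 0) := by
  classical
  set z : ℕ → lp (fun _ : ℕ => ℝ) 1 := fun k => x k - y with hzdef
  have hw0 : ∀ f : lp (fun _ : ℕ => ℝ) 1 →L[ℝ] ℝ,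
      Tendsto (fun k => f (z k)) atTop (𝓝 0) := by
    intro f
    have h := (hw f).sub_const (f y)
    simp only [sub_self] at h
    have : (fun k => f (z k)) = fun k => f (x k) - f y := by
      funext k; simp [hzdef, map_sub]
    rw [this]; exact h
  -- coordinatewise convergence
  have hcoord : ∀ i, Tendsto (fun k => |(z k : ∀ _ : ℕ, ℝ) i|) atTop (𝓝 0) := by
    intro i
    have h := (hw0 (coord i)).abs
    simp only [abs_zero] at h; exact h
  -- finite sums of coordinates tend to 0
  have hfin : ∀ n, Tendsto (fun k => ∑ i ∈ Finset.Iic n, |(z k : ∀ _ : ℕ, ℝ) i|)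
      atTop (𝓝 0) := by
    intro n
    have h := tendsto_finset_sum (Finset.Iic n) (fun i _ => hcoord i)
    simpa using h
  by_contra hcon
  -- extract ε > 0 with frequently ε ≤ ‖z k‖
  obtain ⟨ε, hε, hfreq⟩ : ∃ ε > 0, ∃ᶠ k in atTop, ε ≤ ‖z k‖ := by
    by_contra h
    push_neg at h
    apply hcon
    rw [Metric.tendsto_nhds]
    intro ε hε
    have h2 := h ε hε
    filter_upwards [h2] with k hk
    rw [Real.dist_eq, sub_zero, abs_of_nonneg (norm_nonneg _)]
    exact hk
  -- step relation for the gliding hump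
  set Step : ℕ × ℕ → ℕ × ℕ → Prop := fun p q =>
    p.1 < q.1 ∧ p.2 < q.2 ∧ ε ≤ ‖z q.1‖ ∧
      (∑ i ∈ Finset.Iic p.2, |(z q.1 : ∀ _ : ℕ, ℝ) i|) < ε / 5 ∧
      ‖z q.1‖ - (∑ i ∈ Finset.Iic q.2, |(z q.1 : ∀ _ : ℕ, ℝ) i|) < ε / 5 with hStep
  have hstep : ∀ p, ∃ q, Step p q := by
    rintro ⟨m, n⟩
    have h1 : ∀ᶠ k in atTop, (∑ i ∈ Finset.Iic n, |(z k : ∀ _ : ℕ, ℝ) i|) < ε / 5 :=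
      (hfin n).eventually_lt_const (by positivity)
    have h2 : ∀ᶠ k in atTop, m < k := eventually_gt_atTop m
    obtain ⟨k, hk1, hk2, hk3⟩ := (hfreq.and_eventually (h1.and h2)).exists
    have h3 : Tendsto (fun n' => ‖z k‖ - ∑ i ∈ Finset.Iic n', |(z k : ∀ _ : ℕ, ℝ) i|)
        atTop (𝓝 (‖z k‖ - ‖z k‖)) := tendsto_const_nhds.sub (l1_partial_tendsto (z k))
    rw [sub_self] at h3
    have h4 := h3.eventually_lt_const (show (0:ℝ) < ε / 5 by positivity)
    obtain ⟨n', hn'1, hn'2⟩ := (h4.and (eventually_gt_atTop n)).exists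
    exact ⟨(k, n'), hk3, hn'2, hk1, hk2, hn'1⟩
  -- build the sequence of pairs
  set seq : ℕ → ℕ × ℕ := fun j => Nat.rec (0, 0) (fun _ p => Classical.choose (hstep p)) j
    with hseqdef
  have hseq : ∀ j, Step (seq j) (seq (j + 1)) := fun j => Classical.choose_spec (hstep (seq j))
  set kk : ℕ → ℕ := fun j => (seq j).1 with hkk
  set nn : ℕ → ℕ := fun j => (seq j).2 with hnn
  have hkmono : StrictMono kk := strictMono_nat_of_lt_succ fun j => (hseq j).1
  have hnmono : StrictMono nn := strictMono_nat_of_lt_succ fun j => (hseq j).2.1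
  -- the sign sequence
  set t : ℕ → ℝ := fun i =>
    if 0 < i then Real.sign ((z (kk (Nat.findGreatest (fun j => nn j < i) i + 1)) :
      ∀ _ : ℕ, ℝ) i) else 0 with htdef
  have ht : ∀ i, |t i| ≤ 1 := by
    intro i
    rw [htdef]
    dsimp only
    split
    · exact abs_sign_le _
    · simp
  -- identification of the hump index
  have hJ : ∀ j i, nn j < i → i ≤ nn (j + 1) →
      Nat.findGreatest (fun j' => nn j' < i) i = j := by
    intro j i h1 h2
    rw [Nat.findGreatest_eq_iff]
    refine ⟨le_trans (le_trans hnmono.le_apply h1.le) le_rfl, fun _ => h1, ?_⟩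
    intro m hm _ hP
    have : nn (j + 1) ≤ nn m := hnmono.monotone hm
    omega
  have ht_mul : ∀ j i, nn j < i → i ≤ nn (j + 1) →
      t i * (z (kk (j + 1)) : ∀ _ : ℕ, ℝ) i = |(z (kk (j + 1)) : ∀ _ : ℕ, ℝ) i| := by
    intro j i h1 h2
    have hi : 0 < i := lt_of_le_of_lt (Nat.zero_le _) h1
    rw [htdef]
    dsimp only
    rw [if_pos hi, hJ j i h1 h2, real_sign_mul_self]
  -- the key lower bound
  set F := pairing t ht with hF
  have key : ∀ j, ε / 5 ≤ F (z (kk (j + 1))) := by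
    intro j
    set w := z (kk (j + 1)) with hw'
    have hle : nn j ≤ nn (j + 1) := (hnmono.monotone (Nat.le_succ j))
    have hset : Finset.Iic (nn (j + 1)) =
        Finset.Iic (nn j) ∪ Finset.Ioc (nn j) (nn (j + 1)) := by
      ext a; simp only [Finset.mem_Iic, Finset.mem_union, Finset.mem_Ioc]; omega
    have hdisj : Disjoint (Finset.Iic (nn j)) (Finset.Ioc (nn j) (nn (j + 1))) := by
      rw [Finset.disjoint_left]
      intro a ha hb
      simp only [Finset.mem_Iic] at ha
      simp only [Finset.mem_Ioc] at hb
      omega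
    have hsumm : Summable (fun i => t i * (w : ∀ _ : ℕ, ℝ) i) := pair_summable t ht w
    have hsplit := Summable.sum_add_tsum_compl (s := Finset.Iic (nn (j + 1))) hsumm
    have habs_split := Summable.sum_add_tsum_compl (s := Finset.Iic (nn (j + 1))) (l1_summable w)
    -- names
    set a := ∑ i ∈ Finset.Iic (nn j), t i * (w : ∀ _ : ℕ, ℝ) i with ha
    set b := ∑ i ∈ Finset.Ioc (nn j) (nn (j + 1)), t i * (w : ∀ _ : ℕ, ℝ) i with hb
    set c := ∑' i : ↑(↑(Finset.Iic (nn (j + 1))) : Set ℕ)ᶜ, t i * (w : ∀ _ : ℕ, ℝ) i with hc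
    set PA := ∑ i ∈ Finset.Iic (nn j), |(w : ∀ _ : ℕ, ℝ) i| with hPA
    set PB := ∑ i ∈ Finset.Iic (nn (j + 1)), |(w : ∀ _ : ℕ, ℝ) i| with hPB
    have hFval : F w = a + b + c := by
      rw [hF, pairing_apply, ← hsplit, hset, Finset.sum_union hdisj]
    -- bound on a
    have hA : |a| ≤ PA := by
      refine le_trans (Finset.abs_sum_le_sum_abs _ _) ?_
      apply Finset.sum_le_sum
      intro i _
      rw [abs_mul]
      calc |t i| * |(w : ∀ _ : ℕ, ℝ) i| ≤ 1 * |(w : ∀ _ : ℕ, ℝ) i| :=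
            mul_le_mul_of_nonneg_right (ht i) (abs_nonneg _)
        _ = |(w : ∀ _ : ℕ, ℝ) i| := one_mul _
    have hPA_lt : PA < ε / 5 := (hseq j).2.2.2.1
    -- value of b
    have hBval : b = PB - PA := by
      rw [hPB, hset, Finset.sum_union hdisj, hb, hPA]
      have : ∀ i ∈ Finset.Ioc (nn j) (nn (j + 1)),
          t i * (w : ∀ _ : ℕ, ℝ) i = |(w : ∀ _ : ℕ, ℝ) i| := by
        intro i hi
        simp only [Finset.mem_Ioc] at hi
        exact ht_mul j i hi.1 hi.2
      rw [Finset.sum_congr rfl this]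
      ring
    have hPB_gt : ‖w‖ - PB < ε / 5 := (hseq j).2.2.2.2
    have hnorm_ge : ε ≤ ‖w‖ := (hseq j).2.2.1
    -- bound on c
    have hC : |c| ≤ ‖w‖ - PB := by
      have htail : PB + (∑' i : ↑(↑(Finset.Iic (nn (j + 1))) : Set ℕ)ᶜ,
          |(w : ∀ _ : ℕ, ℝ) i|) = ‖w‖ := by
        rw [l1_norm]; exact habs_split
      have h1 : |c| ≤ ∑' i : ↑(↑(Finset.Iic (nn (j + 1))) : Set ℕ)ᶜ,
          |(w : ∀ _ : ℕ, ℝ) i| := by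
        rw [hc, ← Real.norm_eq_abs]
        refine le_trans (norm_tsum_le_tsum_norm ?_) ?_
        · simpa only [Real.norm_eq_abs, Function.comp_apply] using ((hsumm.subtype _).abs)
        apply Summable.tsum_le_tsum _ _ ((l1_summable w).subtype _)
        swap
        · simpa only [Real.norm_eq_abs, Function.comp_apply] using ((hsumm.subtype _).abs)
        intro i
        rw [Real.norm_eq_abs, abs_mul]
        calc |t ↑i| * |(w : ∀ _ : ℕ, ℝ) ↑i| ≤ 1 * |(w : ∀ _ : ℕ, ℝ) ↑i| :=
              mul_le_mul_of_nonneg_right (ht ↑i) (abs_nonneg _)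
          _ = |(w : ∀ _ : ℕ, ℝ) ↑i| := one_mul _
      linarith
    have h1 := abs_le.mp hA
    have h2 := abs_le.mp hC
    rw [hFval, hBval]
    linarith
  -- contradiction with weak convergence
  have htend : Tendsto (fun j => kk (j + 1)) atTop atTop :=
    hkmono.tendsto_atTop.comp (tendsto_add_atTop_nat 1)
  have hF0 : Tendsto (fun j => F (z (kk (j + 1)))) atTop (𝓝 0) := (hw0 F).comp htend
  have hev : ∀ᶠ j in atTop, F (z (kk (j + 1))) < ε / 5 :=
    hF0.eventually_lt_const (by positivity)
  obtain ⟨j, hj⟩ := hev.exists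
  exact absurd (key j) (not_le.mpr hj)
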